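/- arXiv:2401.08129 — 6 statements merged into one kernel-verified Lean document; each statement's English description precedes it below -/
import Mathlib

section
/- Fix n ≥ 1, m ∈ {1,…,n}, δ ∈ ℂ with δ ≠ 0, and let J be the n×n all-ones matrix. If λ ≠ 0 is an eigenvalue of S^m + δJ with eigenvector v, then ⟨v, 𝟙⟩ ≠ 0. -/
/-- The `n × n` shift matrix `S` with `S j k = 1` iff `k = j + 1`. -/
def shiftMatrix (n : ℕ) : Matrix (Fin n) (Fin n) ℂ :=
  Matrix.of fun j k => if (j : ℕ) + 1 = (k : ℕ) then 1 else 0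

/-- The `n × n` all-ones matrix. -/
def allOnes (n : ℕ) : Matrix (Fin n) (Fin n) ℂ := Matrix.of fun _ _ => 1

lemma shift_pow (n k : ℕ) :
    shiftMatrix n ^ k = Matrix.of fun (j l : Fin n) => if (j : ℕ) + k = (l : ℕ) then (1 : ℂ) else 0 := by
  induction k with
  | zero =>
    ext j l
    simp [Matrix.one_apply, Fin.ext_iff, eq_comm]
  | succ k ih =>
    ext j l
    rw [pow_succ, ih]
    simp only [Matrix.mul_apply, Matrix.of_apply, shiftMatrix, ite_mul, one_mul, zero_mul]
    by_cases h : (j : ℕ) + k < n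
    · rw [Finset.sum_eq_single (⟨(j : ℕ) + k, h⟩ : Fin n)]
      · simp [Nat.add_assoc]
      · intro b _ hb
        rw [if_neg]
        intro hc
        exact hb (by simpa [Fin.ext_iff] using hc.symm)
      · simp
    · rw [Finset.sum_eq_zero, if_neg]
      · omega
      · intro b _
        rw [if_neg]
        omega

lemma shift_pow_zero (n k : ℕ) (hk : n ≤ k) : shiftMatrix n ^ k = 0 := by
  rw [shift_pow]
  ext j l
  simp only [Matrix.of_apply, Matrix.zero_apply]
  rw [if_neg]
  omega

/-- If `λ ≠ 0` is an eigenvalue of `S^m + δJ` with eigenvector `v`, then `⟨v, 𝟙⟩ ≠ 0`. -/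
theorem stmt_2 (n m : ℕ) (hn : 1 ≤ n) (hm : 1 ≤ m) (hmn : m ≤ n)
    (δ : ℂ) (hδ : δ ≠ 0) (lam : ℂ) (hlam : lam ≠ 0)
    (v : Fin n → ℂ) (hv : v ≠ 0)
    (heig : (shiftMatrix n ^ m + δ • allOnes n).mulVec v = lam • v) :
    ∑ j : Fin n, v j * (starRingEnd ℂ) 1 ≠ 0 := by
  intro hsum
  simp only [map_one, mul_one] at hsum
  have hJ : (allOnes n).mulVec v = 0 := by
    ext j
    simp [allOnes, Matrix.mulVec, dotProduct, hsum]
  rw [Matrix.add_mulVec, Matrix.smul_mulVec, hJ, smul_zero, add_zero] at heig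
  have key : ∀ k, ((shiftMatrix n ^ m) ^ k).mulVec v = lam ^ k • v := by
    intro k
    induction k with
    | zero => simp
    | succ k ih =>
      rw [pow_succ, pow_succ, ← Matrix.mulVec_mulVec, heig, Matrix.mulVec_smul, ih,
        smul_smul, mul_comm]
  have h0 := key n
  rw [← pow_mul, shift_pow_zero n (m * n) (Nat.le_mul_of_pos_left n hm)] at h0
  have : v = 0 := by
    have := h0.symm
    rw [Matrix.zero_mulVec] at this
    exact (smul_eq_zero.mp this).resolve_left (pow_ne_zero n hlam)
  exact hv this
end

section
/- Fix n ≥ 1, m ∈ {1,…,n}, δ ∈ ℂ \ {0}, and set p₁ = ⌊(n−1)/m⌋. A nonzero complex number z is an eigenvalue of S^m + δJ if and only if z^{p₁+1} − nδ · Σ_{k=0}^{p₁} (1 − (p₁−k)·(m/n)) z^k = 0. -/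
lemma shift_mulVec (n : ℕ) (v : Fin n → ℂ) (j : Fin n) :
    (shiftMatrix n).mulVec v j = if h : (j:ℕ)+1 < n then v ⟨(j:ℕ)+1, h⟩ else 0 := by
  unfold shiftMatrix Matrix.mulVec dotProduct
  by_cases h : (j:ℕ)+1 < n
  · rw [dif_pos h, Finset.sum_eq_single (⟨(j:ℕ)+1, h⟩ : Fin n)]
    · simp
    · intro k _ hk
      simp only [Matrix.of_apply]
      rw [if_neg, zero_mul]
      intro hc; exact hk (Fin.ext hc.symm)
    · simp
  · rw [dif_neg h]
    apply Finset.sum_eq_zero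
    intro k _
    simp only [Matrix.of_apply]
    rw [if_neg, zero_mul]
    have := k.isLt; omega

lemma shift_pow_mulVec (n m : ℕ) (v : Fin n → ℂ) (j : Fin n) :
    ((shiftMatrix n)^m).mulVec v j = if h : (j:ℕ)+m < n then v ⟨(j:ℕ)+m, h⟩ else 0 := by
  induction m generalizing j with
  | zero => simp [Matrix.mulVec_one]
  | succ m ih =>
    rw [pow_succ', ← Matrix.mulVec_mulVec, shift_mulVec]
    by_cases h1 : (j:ℕ)+1 < n
    · rw [dif_pos h1, ih]
      by_cases h2 : (j:ℕ)+1+m < n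
      · rw [dif_pos h2, dif_pos (by omega : (j:ℕ)+(m+1) < n)]
        congr 1; apply Fin.ext; simp; omega
      · rw [dif_neg h2, dif_neg (by omega)]
    · rw [dif_neg h1, dif_neg (by omega)]

lemma allOnes_mulVec (n : ℕ) (v : Fin n → ℂ) (j : Fin n) :
    (allOnes n).mulVec v j = ∑ k, v k := by
  simp [allOnes, Matrix.mulVec, dotProduct]

noncomputable def G (z : ℂ) (t : ℕ) : ℂ := ∑ i ∈ Finset.range t, (z⁻¹)^(i+1)

lemma zG (z : ℂ) (hz : z ≠ 0) (t : ℕ) : z * G z (t+1) = 1 + G z t := by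
  unfold G
  rw [Finset.mul_sum]
  have h : ∀ i : ℕ, z * (z⁻¹)^(i+1) = (z⁻¹)^i := by
    intro i
    rw [pow_succ', ← mul_assoc, mul_inv_cancel₀ hz, one_mul]
  simp_rw [h]
  rw [Finset.sum_range_succ']
  simp [add_comm]

noncomputable def W (n m : ℕ) (δ z : ℂ) (j : Fin n) : ℂ := δ * G z ((n - 1 - (j:ℕ))/m + 1)

lemma W_boundary (n m : ℕ) (δ z : ℂ) (hz : z ≠ 0) (j : Fin n)
    (h : n ≤ (j:ℕ) + m) : z * W n m δ z j = δ := by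
  have hj := j.isLt
  have h0 : (n - 1 - (j:ℕ))/m = 0 := Nat.div_eq_of_lt (by omega)
  unfold W
  rw [h0, ← mul_assoc, mul_comm z δ, mul_assoc, zG z hz 0]
  simp [G]

lemma W_rec (n m : ℕ) (hm : 1 ≤ m) (δ z : ℂ) (hz : z ≠ 0) (j : Fin n)
    (h : (j:ℕ) + m < n) : z * W n m δ z j = W n m δ z ⟨(j:ℕ)+m, h⟩ + δ := by
  unfold W
  have hstep : (n - 1 - (j:ℕ))/m = (n - 1 - ((j:ℕ)+m))/m + 1 := by
    have h1 : n - 1 - (j:ℕ) = (n - 1 - ((j:ℕ)+m)) + m := by omega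
    rw [h1, Nat.add_div_right _ (by omega)]
  rw [hstep, ← mul_assoc, mul_comm z δ, mul_assoc, zG z hz]
  simp; ring

lemma sumW (n m : ℕ) (hn : 1 ≤ n) (hm : 1 ≤ m) (δ z : ℂ) :
    ∑ j : Fin n, W n m δ z j
      = δ * ∑ i ∈ Finset.range ((n-1)/m + 1), ((n - i*m : ℕ) : ℂ) * (z⁻¹)^(i+1) := by
  unfold W G
  rw [← Finset.mul_sum]
  congr 1
  rw [Fin.sum_univ_eq_sum_range (fun j => ∑ i ∈ Finset.range ((n-1-j)/m+1), (z⁻¹)^(i+1))]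
  have hext : ∀ j ∈ Finset.range n,
      ∑ i ∈ Finset.range ((n-1-j)/m+1), (z⁻¹)^(i+1)
        = ∑ i ∈ Finset.range ((n-1)/m+1), if i < (n-1-j)/m+1 then (z⁻¹)^(i+1) else 0 := by
    intro j hj
    have hT : (n-1-j)/m + 1 ≤ (n-1)/m + 1 :=
      Nat.succ_le_succ (Nat.div_le_div_right (by omega))
    have h1 : Finset.range ((n-1-j)/m+1)
        = (Finset.range ((n-1)/m+1)).filter (fun i => i < (n-1-j)/m+1) := by
      ext i
      simp only [Finset.mem_range, Finset.mem_filter]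
      omega
    rw [h1, Finset.sum_filter]
  rw [Finset.sum_congr rfl hext, Finset.sum_comm]
  apply Finset.sum_congr rfl
  intro i hi
  rw [← Finset.sum_filter, Finset.sum_const, nsmul_eq_mul]
  congr 1
  have him : i * m ≤ n - 1 := by
    rw [Finset.mem_range] at hi
    calc i * m ≤ ((n-1)/m) * m := Nat.mul_le_mul_right m (by omega)
    _ ≤ n - 1 := Nat.div_mul_le_self _ _
  have hfil : (Finset.range n).filter (fun j => i < (n-1-j)/m+1) = Finset.range (n - i*m) := by
    ext j
    simp only [Finset.mem_filter, Finset.mem_range, Nat.lt_succ_iff,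
      Nat.le_div_iff_mul_le (show 0 < m by omega)]
    omega
  rw [hfil, Finset.card_range]

lemma polyB (n m p₁ : ℕ) (hn : 1 ≤ n) (hm : 1 ≤ m) (hmn : m ≤ n)
    (hp₁ : p₁ = (n - 1) / m) (δ z : ℂ) (hz : z ≠ 0) :
    z^(p₁+1) * (1 - δ * ∑ i ∈ Finset.range (p₁+1), ((n - i*m : ℕ) : ℂ) * (z⁻¹)^(i+1))
      = z ^ (p₁ + 1) - (n : ℂ) * δ *
        ∑ k ∈ Finset.range (p₁ + 1),
          (1 - ((p₁ : ℂ) - (k : ℂ)) * ((m : ℂ) / (n : ℂ))) * z ^ k := by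
  have hn0 : (n:ℂ) ≠ 0 := Nat.cast_ne_zero.mpr (by omega)
  have hpm : p₁ * m ≤ n - 1 := by
    rw [hp₁]; exact Nat.div_mul_le_self _ _
  rw [mul_sub, mul_one]
  congr 1
  simp only [Finset.mul_sum]
  rw [← Finset.sum_range_reflect]
  apply Finset.sum_congr rfl
  intro k hk
  rw [Finset.mem_range, Nat.lt_succ_iff] at hk
  have h1 : p₁ + 1 - 1 - k = p₁ - k := by omega
  rw [h1]
  have hzz : z^(p₁+1) * (z⁻¹)^((p₁-k)+1) = z^k := by
    have : z^(p₁+1) = z^k * z^((p₁-k)+1) := by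
      rw [← pow_add]; congr 1; omega
    rw [this, mul_assoc, ← mul_pow, mul_inv_cancel₀ hz, one_pow, mul_one]
  have hcast : ((n - (p₁-k)*m : ℕ) : ℂ) = (n:ℂ) - ((p₁:ℂ) - (k:ℂ)) * (m:ℂ) := by
    have hle : (p₁-k)*m ≤ n := by
      calc (p₁-k)*m ≤ p₁*m := Nat.mul_le_mul_right m (by omega)
      _ ≤ n := by omega
    push_cast [Nat.cast_sub hle, Nat.cast_sub hk]
    ring
  calc z^(p₁+1) * (δ * (((n - (p₁-k)*m : ℕ) : ℂ) * (z⁻¹)^((p₁-k)+1)))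
      = δ * (((n - (p₁-k)*m : ℕ) : ℂ) * (z^(p₁+1) * (z⁻¹)^((p₁-k)+1))) := by ring
    _ = δ * (((n:ℂ) - ((p₁:ℂ) - (k:ℂ)) * (m:ℂ)) * z^k) := by rw [hzz, hcast]
    _ = (n:ℂ) * δ * ((1 - ((p₁:ℂ) - (k:ℂ)) * ((m:ℂ)/(n:ℂ))) * z^k) := by
        field_simp

/-- A nonzero `z` is an eigenvalue of `S^m + δJ` iff
`z^{p₁+1} − nδ Σ_{k=0}^{p₁} (1 − (p₁−k)(m/n)) z^k = 0`, where `p₁ = ⌊(n−1)/m⌋`. -/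
theorem stmt_4 (n m : ℕ) (hn : 1 ≤ n) (hm : 1 ≤ m) (hmn : m ≤ n)
    (δ : ℂ) (hδ : δ ≠ 0) (z : ℂ) (hz : z ≠ 0) (p₁ : ℕ) (hp₁ : p₁ = (n - 1) / m) :
    (∃ v : Fin n → ℂ, v ≠ 0 ∧ (shiftMatrix n ^ m + δ • allOnes n).mulVec v = z • v) ↔
    z ^ (p₁ + 1) - (n : ℂ) * δ *
      ∑ k ∈ Finset.range (p₁ + 1),
        (1 - ((p₁ : ℂ) - (k : ℂ)) * ((m : ℂ) / (n : ℂ))) * z ^ k = 0 := by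
  have key : ∀ v : Fin n → ℂ,
      ((shiftMatrix n ^ m + δ • allOnes n).mulVec v = z • v ↔
       ∀ j : Fin n, (if h : (j:ℕ)+m < n then v ⟨(j:ℕ)+m, h⟩ else 0) + δ * (∑ k, v k)
         = z * v j) := by
    intro v
    constructor
    · intro hv j
      have h := congrFun hv j
      rw [Matrix.add_mulVec, Matrix.smul_mulVec] at h
      simpa [shift_pow_mulVec, allOnes_mulVec, smul_eq_mul] using h
    · intro h
      funext j
      rw [Matrix.add_mulVec, Matrix.smul_mulVec]
      simpa [shift_pow_mulVec, allOnes_mulVec, smul_eq_mul] using h j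
  have hiden : z ^ (p₁ + 1) - (n : ℂ) * δ * ∑ k ∈ Finset.range (p₁ + 1),
        (1 - ((p₁ : ℂ) - (k : ℂ)) * ((m : ℂ) / (n : ℂ))) * z ^ k
      = z^(p₁+1) * (1 - ∑ j : Fin n, W n m δ z j) := by
    rw [sumW n m hn hm δ z, ← hp₁, polyB n m p₁ hn hm hmn hp₁ δ z hz]
  have hmul : ∀ t : ℕ, (t+1)*m = t*m + m := fun t => by ring
  constructor
  · rintro ⟨v, hv0, hv⟩
    rw [key v] at hv
    set s : ℂ := ∑ k, v k with hs
    have hs0 : s ≠ 0 := by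
      intro h0
      apply hv0
      have main : ∀ t : ℕ, ∀ j : Fin n, n ≤ (j:ℕ) + t * m → v j = 0 := by
        intro t
        induction t with
        | zero => intro j hj; have := j.isLt; omega
        | succ t ih =>
          intro j hj
          have h := hv j
          rw [h0, mul_zero, add_zero] at h
          by_cases hc : (j:ℕ)+m < n
          · rw [dif_pos hc] at h
            rw [ih ⟨(j:ℕ)+m, hc⟩ (by have := hmul t; simp only [Fin.val_mk]; omega)] at h
            exact (mul_eq_zero.mp h.symm).resolve_left hz
          · rw [dif_neg hc] at h
            exact (mul_eq_zero.mp h.symm).resolve_left hz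
      funext j
      have hnm : n ≤ n * m := Nat.le_mul_of_pos_right n (by omega)
      exact main n j (by omega)
    have hvW : ∀ j : Fin n, v j = s * W n m δ z j := by
      have main : ∀ t : ℕ, ∀ j : Fin n, n ≤ (j:ℕ) + t * m → v j = s * W n m δ z j := by
        intro t
        induction t with
        | zero => intro j hj; have := j.isLt; omega
        | succ t ih =>
          intro j hj
          have h := hv j
          apply mul_left_cancel₀ hz
          by_cases hc : (j:ℕ)+m < n
          · rw [dif_pos hc] at h
            rw [ih ⟨(j:ℕ)+m, hc⟩ (by have := hmul t; simp only [Fin.val_mk]; omega)] at h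
            have h2 := W_rec n m hm δ z hz j hc
            rw [← h]
            linear_combination (-s) * h2
          · rw [dif_neg hc, zero_add] at h
            have h2 := W_boundary n m δ z hz j (by omega)
            rw [← h]
            linear_combination (-s) * h2
      intro j
      have hnm : n ≤ n * m := Nat.le_mul_of_pos_right n (by omega)
      exact main n j (by omega)
    have hW1 : ∑ j : Fin n, W n m δ z j = 1 := by
      have heq : s = s * ∑ j : Fin n, W n m δ z j := by
        calc s = ∑ k, v k := hs
        _ = ∑ k, s * W n m δ z k := Finset.sum_congr rfl (fun k _ => hvW k)
        _ = s * ∑ j : Fin n, W n m δ z j := (Finset.mul_sum _ _ _).symm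
      apply mul_left_cancel₀ hs0
      rw [mul_one, ← heq]
    rw [hiden, hW1]
    ring
  · intro hpoly
    rw [hiden] at hpoly
    have hW1 : ∑ j : Fin n, W n m δ z j = 1 := by
      rcases mul_eq_zero.mp hpoly with h | h
      · exact absurd h (pow_ne_zero _ hz)
      · linear_combination -h
    refine ⟨W n m δ z, ?_, ?_⟩
    · intro h0
      have h1 : W n m δ z ⟨n-1, by omega⟩ = 0 := by rw [h0]; rfl
      unfold W G at h1
      simp only [Fin.val_mk, Nat.sub_self, Nat.zero_div, zero_add,
        Finset.sum_range_one, pow_one] at h1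
      rcases mul_eq_zero.mp h1 with h | h
      · exact hδ h
      · exact hz (inv_eq_zero.mp h)
    · rw [key]
      intro j
      rw [hW1, mul_one]
      by_cases hc : (j:ℕ)+m < n
      · rw [dif_pos hc]
        exact (W_rec n m hm δ z hz j hc).symm
      · rw [dif_neg hc, zero_add]
        exact (W_boundary n m δ z hz j (by omega)).symm
end

section
/- Fix n ≥ 1, m ∈ {1,…,n}, δ > 0, and set p₁ = ⌊(n−1)/m⌋. Every root of the polynomial z^{p₁+1} − nδ Σ_{k=0}^{p₁} (1 − (p₁−k)(m/n)) z^k lies strictly inside the circle |z| = nδ + 1. -/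
/-- Every root of `z^{p₁+1} − nδ Σ_{k=0}^{p₁} (1 − (p₁−k)(m/n)) z^k` lies strictly
inside the circle `|z| = nδ + 1`. -/
theorem stmt_5 (n m : ℕ) (hn : 1 ≤ n) (hm : 1 ≤ m) (hmn : m ≤ n)
    (δ : ℝ) (hδ : 0 < δ) (p₁ : ℕ) (hp₁ : p₁ = (n - 1) / m) (z : ℂ)
    (hroot : z ^ (p₁ + 1) - (n : ℂ) * (δ : ℂ) *
      ∑ k ∈ Finset.range (p₁ + 1),
        (1 - ((p₁ : ℂ) - (k : ℂ)) * ((m : ℂ) / (n : ℂ))) * z ^ k = 0) :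
    ‖z‖ < n * δ + 1 := by
  by_contra hcon
  push_neg at hcon
  set r := ‖z‖ with hr
  have hn' : (0:ℝ) < n := by exact_mod_cast hn
  have hnδ : (0:ℝ) < n * δ := by positivity
  have hr1 : (1:ℝ) < r := by linarith
  rw [sub_eq_zero] at hroot
  -- each coefficient has absolute value ≤ 1
  have hpm : p₁ * m ≤ n := by
    calc p₁ * m ≤ n - 1 := by rw [hp₁]; exact Nat.div_mul_le_self _ _
    _ ≤ n := Nat.sub_le _ _
  have hc : ∀ k ∈ Finset.range (p₁ + 1),
      ‖(1 - ((p₁ : ℂ) - (k : ℂ)) * ((m : ℂ) / (n : ℂ)))‖ ≤ 1 := by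
    intro k hk
    have hk' : k ≤ p₁ := Nat.lt_succ_iff.mp (Finset.mem_range.mp hk)
    have hcast : (1 - ((p₁ : ℂ) - (k : ℂ)) * ((m : ℂ) / (n : ℂ)))
        = ((1 - ((p₁ : ℝ) - (k : ℝ)) * ((m : ℝ) / (n : ℝ)) : ℝ) : ℂ) := by
      push_cast; ring
    rw [hcast, Complex.norm_real, Real.norm_eq_abs, abs_le]
    have h0 : (0:ℝ) ≤ ((p₁ : ℝ) - (k : ℝ)) * ((m : ℝ) / (n : ℝ)) := by
      have : (k:ℝ) ≤ (p₁:ℝ) := by exact_mod_cast hk'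
      have hm' : (0:ℝ) ≤ (m:ℝ)/(n:ℝ) := by positivity
      nlinarith
    have h1 : ((p₁ : ℝ) - (k : ℝ)) * ((m : ℝ) / (n : ℝ)) ≤ 1 := by
      have hle : ((p₁ : ℝ) - (k : ℝ)) * (m:ℝ) ≤ (p₁:ℝ) * (m:ℝ) := by
        have hk'' : (0:ℝ) ≤ (k:ℝ) := by positivity
        have hm0 : (0:ℝ) ≤ (m:ℝ) := by positivity
        nlinarith
      have hpm' : (p₁:ℝ) * (m:ℝ) ≤ (n:ℝ) := by exact_mod_cast hpm
      calc ((p₁ : ℝ) - (k : ℝ)) * ((m : ℝ) / (n : ℝ))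
          = (((p₁ : ℝ) - (k : ℝ)) * (m:ℝ)) / (n:ℝ) := by ring
        _ ≤ 1 := by rw [div_le_one hn']; linarith
    constructor <;> linarith
  -- key inequality
  have key : r ^ (p₁ + 1) ≤ n * δ * ∑ k ∈ Finset.range (p₁ + 1), r ^ k := by
    calc r ^ (p₁ + 1) = ‖(z ^ (p₁ + 1))‖ := by rw [norm_pow]
      _ = ‖((n : ℂ) * (δ : ℂ) *
          ∑ k ∈ Finset.range (p₁ + 1),
            (1 - ((p₁ : ℂ) - (k : ℂ)) * ((m : ℂ) / (n : ℂ))) * z ^ k)‖ := by rw [hroot]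
      _ = (n * δ) * ‖(∑ k ∈ Finset.range (p₁ + 1),
            (1 - ((p₁ : ℂ) - (k : ℂ)) * ((m : ℂ) / (n : ℂ))) * z ^ k)‖ := by
          rw [norm_mul, norm_mul, Complex.norm_natCast, Complex.norm_real, Real.norm_eq_abs,
            abs_of_pos hδ]
      _ ≤ (n * δ) * ∑ k ∈ Finset.range (p₁ + 1), r ^ k := by
          apply mul_le_mul_of_nonneg_left _ (le_of_lt hnδ)
          calc ‖(∑ k ∈ Finset.range (p₁ + 1),
                (1 - ((p₁ : ℂ) - (k : ℂ)) * ((m : ℂ) / (n : ℂ))) * z ^ k)‖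
              ≤ ∑ k ∈ Finset.range (p₁ + 1),
                ‖((1 - ((p₁ : ℂ) - (k : ℂ)) * ((m : ℂ) / (n : ℂ))) * z ^ k)‖ :=
                norm_sum_le _ _
            _ ≤ ∑ k ∈ Finset.range (p₁ + 1), r ^ k := by
                apply Finset.sum_le_sum
                intro k hk
                rw [norm_mul, norm_pow]
                have := hc k hk
                have hz : (0:ℝ) ≤ r ^ k := by positivity
                nlinarith
  have hgeom : (∑ k ∈ Finset.range (p₁ + 1), r ^ k) * (r - 1) = r ^ (p₁ + 1) - 1 :=
    geom_sum_mul r (p₁ + 1)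
  have hS : (0:ℝ) ≤ ∑ k ∈ Finset.range (p₁ + 1), r ^ k := by
    apply Finset.sum_nonneg; intro k _; positivity
  nlinarith [mul_le_mul_of_nonneg_left (show n * δ ≤ r - 1 by linarith) hS]
end

section
/- Suppose nδ > 3 + 2√2, δ > 0, m ∈ {1,…,n}, p₁ = ⌊(n−1)/m⌋ ≥ 1, and let r₋ < r₊ be the two real roots of r² − (nδ+1)r + 2nδ = 0. Then the polynomial P(z) = z^{p₁+1} − nδ Σ_{k=0}^{p₁} (1 − (p₁−k)(m/n)) z^k has exactly p₁ roots (with multiplicity) in the closed disk |z| ≤ r for every r with r₋ < r < r₊; consequently exactly one root lies in the annulus r₊ ≤ |z| < nδ+1 and no root lies in the open annulus r₋ < |z| < r₊. -/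
open Polynomial

private lemma factor_helper (N : ℕ) (a : ℕ → ℂ) (ρ : ℂ) (b : ℕ → ℂ) (htop : b N = 1)
    (h0 : ρ * b 0 = a 0) (hrec : ∀ j, ρ * b (j+1) = b j + a (j+1)) :
    (X : Polynomial ℂ)^(N+1) - ∑ k ∈ Finset.range (N+1), C (a k) * X^k
      = (X - C ρ) * ∑ j ∈ Finset.range (N+1), C (b j) * X^j := by
  rw [sub_mul, Finset.mul_sum, Finset.mul_sum]
  have e1 : ∑ j ∈ Finset.range (N+1), (X : Polynomial ℂ) * (C (b j) * X^j)
      = ∑ j ∈ Finset.range N, C (b j) * X^(j+1) + C (b N) * X^(N+1) := by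
    rw [← Finset.sum_range_succ (fun j => C (b j) * X^(j+1)) N]
    exact Finset.sum_congr rfl fun j _ => by ring
  have e2 : ∑ j ∈ Finset.range (N+1), C ρ * (C (b j) * X^j)
      = ∑ j ∈ Finset.range N, C (ρ * b (j+1)) * X^(j+1) + C (ρ * b 0) := by
    rw [Finset.sum_range_succ' (fun j => C ρ * (C (b j) * X^j)) N]
    congr 1
    · exact Finset.sum_congr rfl fun j _ => by rw [C_mul]; ring
    · rw [C_mul, pow_zero, mul_one]
  rw [e1, e2, htop, h0]
  have e3 : ∑ k ∈ Finset.range (N+1), C (a k) * X^k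
      = ∑ j ∈ Finset.range N, C (a (j+1)) * X^(j+1) + C (a 0) := by
    rw [Finset.sum_range_succ' (fun k => C (a k) * X^k) N]
    congr 1
    rw [pow_zero, mul_one]
  rw [e3]
  have e4 : ∀ j ∈ Finset.range N, C (ρ * b (j+1)) * X^(j+1)
      = C (b j) * X^(j+1) + C (a (j+1)) * X^(j+1) := fun j _ => by
    rw [hrec j, C_add, add_mul]
  rw [Finset.sum_congr rfl e4, Finset.sum_add_distrib, C_1]
  ring

private lemma ek_bound (N : ℕ) (b : ℕ → ℝ) (hpos : ∀ j, j ≤ N → 0 ≤ b j) (htop : b N = 1)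
    (hratio : ∀ j, j < N → b j ≤ 2 * b (j+1)) (w : ℂ)
    (hw : ∑ j ∈ Finset.range (N+1), ((b j : ℝ) : ℂ) * w^j = 0) :
    ‖w‖ ≤ 2 := by
  by_contra hgt
  push_neg at hgt
  set aw := ‖w‖ with haw
  have haw0 : 0 < aw := by linarith
  have h1 : ∑ j ∈ Finset.range (N+1), ((b j : ℝ):ℂ) * w^(j+1) = 0 := by
    have e : ∑ j ∈ Finset.range (N+1), ((b j:ℝ):ℂ) * w^(j+1)
        = w * ∑ j ∈ Finset.range (N+1), ((b j:ℝ):ℂ) * w^j := by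
      rw [Finset.mul_sum]; exact Finset.sum_congr rfl fun j _ => by ring
    rw [e, hw, mul_zero]
  have key : w^(N+1) = ((2*b 0:ℝ):ℂ) + ∑ i ∈ Finset.range N, ((2*b (i+1) - b i:ℝ):ℂ) * w^(i+1) := by
    have hA : ∑ j ∈ Finset.range N, ((b j:ℝ):ℂ) * w^(j+1) + ((b N:ℝ):ℂ)*w^(N+1) = 0 := by
      rw [← Finset.sum_range_succ (fun j => ((b j:ℝ):ℂ) * w^(j+1)) N]; exact h1
    have hB : ∑ i ∈ Finset.range N, ((b (i+1):ℝ):ℂ) * w^(i+1) + ((b 0:ℝ):ℂ) * w^0 = 0 := by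
      rw [← Finset.sum_range_succ' (fun j => ((b j:ℝ):ℂ) * w^j) N]; exact hw
    rw [htop] at hA
    simp only [pow_zero, mul_one, Complex.ofReal_one, one_mul] at hA hB
    have split : ∑ i ∈ Finset.range N, ((2*b (i+1) - b i:ℝ):ℂ) * w^(i+1)
        = 2 * ∑ i ∈ Finset.range N, ((b (i+1):ℝ):ℂ) * w^(i+1)
          - ∑ i ∈ Finset.range N, ((b i:ℝ):ℂ) * w^(i+1) := by
      rw [Finset.mul_sum, ← Finset.sum_sub_distrib]
      exact Finset.sum_congr rfl fun i _ => by push_cast; ring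
    rw [split]
    push_cast
    linear_combination hA - 2*hB
  have hb2 : ∀ i, i < N → 0 ≤ 2*b (i+1) - b i := fun i hi => by linarith [hratio i hi]
  have habs : aw^(N+1) ≤ 2*b 0 + ∑ i ∈ Finset.range N, (2*b (i+1) - b i) * aw^(i+1) := by
    have h2 : aw^(N+1) = ‖w^(N+1)‖ := by rw [norm_pow]
    rw [h2, key]
    refine le_trans (norm_add_le _ _) ?_
    have t1 : ‖((2*b 0:ℝ):ℂ)‖ = 2*b 0 := by
      rw [Complex.norm_real, Real.norm_eq_abs, abs_of_nonneg (by linarith [hpos 0 (Nat.zero_le N)])]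
    have t2 : ‖(∑ i ∈ Finset.range N, ((2*b (i+1) - b i:ℝ):ℂ) * w^(i+1))‖
        ≤ ∑ i ∈ Finset.range N, (2*b (i+1) - b i) * aw^(i+1) := by
      refine le_trans (norm_sum_le _ _) ?_
      apply Finset.sum_le_sum
      intro i hi
      rw [norm_mul, norm_pow, Complex.norm_real, Real.norm_eq_abs, abs_of_nonneg (hb2 i (Finset.mem_range.mp hi))]
    linarith [t1, t2]
  have htel : ∑ i ∈ Finset.range N, (2*b (i+1) - b i) * aw^(i+1) ≤ 2*b N*aw^N - 2*b 0 := by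
    calc ∑ i ∈ Finset.range N, (2*b (i+1) - b i)*aw^(i+1)
        ≤ ∑ i ∈ Finset.range N, (2*b (i+1)*aw^(i+1) - 2*b i*aw^i) := by
          apply Finset.sum_le_sum
          intro i hi
          have hbi := hpos i ((Finset.mem_range.mp hi).le)
          rw [pow_succ]
          nlinarith [mul_nonneg (mul_nonneg hbi (pow_nonneg (norm_nonneg w) i))
            (show (0:ℝ) ≤ aw - 2 by linarith)]
      _ = 2*b N*aw^N - 2*b 0*aw^0 := Finset.sum_range_sub (fun i => 2*b i*aw^i) N
      _ ≤ 2*b N*aw^N - 2*b 0 := by rw [pow_zero, mul_one]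
  rw [htop] at htel
  have hfin : aw^(N+1) ≤ 2*aw^N := by linarith
  have hpow : 0 < aw^N := pow_pos haw0 N
  nlinarith [pow_succ aw N]


set_option maxHeartbeats 2000000 in
open scoped Classical in
/-- Root localization by Rouché: under `nδ > 3 + 2√2`, the eigenvalue polynomial
`P(z) = z^{p₁+1} − nδ Σ_{k=0}^{p₁} (1 − (p₁−k)(m/n)) z^k` has exactly `p₁` roots
(with multiplicity) in every closed disk `|z| ≤ r` with `r₋ < r < r₊`; exactly one
root lies in the annulus `r₊ ≤ |z| < nδ+1`, and no root lies in `r₋ < |z| < r₊`. -/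
theorem stmt_8 (n m : ℕ) (hn : 1 ≤ n) (hm : 1 ≤ m) (hmn : m ≤ n)
    (δ : ℝ) (hδ : 0 < δ) (h : (n : ℝ) * δ > 3 + 2 * Real.sqrt 2)
    (p₁ : ℕ) (hp₁ : p₁ = (n - 1) / m) (hp₁1 : 1 ≤ p₁)
    (rm rp : ℝ)
    (hrm : rm = ((n : ℝ) * δ + 1 - Real.sqrt (((n : ℝ) * δ + 1) ^ 2 - 8 * (n : ℝ) * δ)) / 2)
    (hrp : rp = ((n : ℝ) * δ + 1 + Real.sqrt (((n : ℝ) * δ + 1) ^ 2 - 8 * (n : ℝ) * δ)) / 2)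
    (P : Polynomial ℂ)
    (hP : P = X ^ (p₁ + 1) - C ((n : ℂ) * (δ : ℂ)) *
      ∑ k ∈ Finset.range (p₁ + 1),
        C (1 - ((p₁ : ℂ) - (k : ℂ)) * ((m : ℂ) / (n : ℂ))) * X ^ k) :
    (∀ r : ℝ, rm < r → r < rp →
      (P.roots.filter (fun z => ‖z‖ ≤ r)).card = p₁) ∧
    (P.roots.filter (fun z => rp ≤ ‖z‖ ∧ ‖z‖ < (n : ℝ) * δ + 1)).card = 1 ∧
    (P.roots.filter (fun z => rm < ‖z‖ ∧ ‖z‖ < rp)).card = 0 := by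
  classical
  have hn0 : (0:ℝ) < n := by exact_mod_cast hn
  set A : ℝ := (n:ℝ) * δ with hA_def
  rw [show 8 * (n:ℝ) * δ = 8 * A by rw [hA_def]; ring] at hrm hrp
  have hsqrt2 : (1:ℝ) < Real.sqrt 2 := by
    rw [show (1:ℝ) = Real.sqrt 1 by simp]
    exact Real.sqrt_lt_sqrt (by norm_num) (by norm_num)
  have hA5 : 5 < A := by linarith
  have hA0 : 0 < A := by linarith
  have hD : 0 < (A+1)^2 - 8*A := by
    nlinarith [Real.sq_sqrt (show (0:ℝ) ≤ 2 by norm_num), Real.sqrt_nonneg 2, h]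
  set s : ℝ := Real.sqrt ((A+1)^2 - 8*A) with hs_def
  have hs2 : s^2 = (A+1)^2 - 8*A := Real.sq_sqrt hD.le
  have hs_pos : 0 < s := Real.sqrt_pos.mpr hD
  have hsA3 : s < A - 3 := by nlinarith [hs_pos.le, hA5]
  have hrm2 : 2 < rm := by rw [hrm]; linarith
  have hrmrp : rm < rp := by rw [hrm, hrp]; linarith
  have hrpA : rp < A := by rw [hrp]; linarith
  clear_value s
  -- coefficients
  set c : ℕ → ℝ := fun k => 1 - ((p₁:ℝ) - (k:ℝ)) * ((m:ℝ) / (n:ℝ)) with hc_def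
  clear_value c
  have hpm : (p₁:ℝ) * m + 1 ≤ n := by
    have h1 : p₁ * m ≤ n - 1 := hp₁ ▸ Nat.div_mul_le_self (n-1) m
    have h2 : p₁ * m + 1 ≤ n := by omega
    exact_mod_cast h2
  have hm0 : (0:ℝ) ≤ m := by positivity
  have hmn0 : (0:ℝ) ≤ (m:ℝ)/(n:ℝ) := div_nonneg hm0 hn0.le
  have hc_pos : ∀ k, k ≤ p₁ → 0 < c k := by
    intro k hk
    have hkm : (0:ℝ) ≤ (k:ℝ) * m := by positivity
    have key : ((p₁:ℝ) - k) * ((m:ℝ)/n) < 1 := by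
      rw [← mul_div_assoc, div_lt_one hn0]
      nlinarith [hpm, hkm]
    simp only [hc_def]
    linarith
  have hc_le1 : ∀ k, k ≤ p₁ → c k ≤ 1 := by
    intro k hk
    have hk' : (k:ℝ) ≤ (p₁:ℝ) := by exact_mod_cast hk
    have h1 : 0 ≤ ((p₁:ℝ) - k) * ((m:ℝ)/n) := mul_nonneg (by linarith) hmn0
    simp only [hc_def]
    linarith
  have hc_mono : ∀ i k : ℕ, i ≤ k → c i ≤ c k := by
    intro i k hik
    have hik' : (i:ℝ) ≤ (k:ℝ) := by exact_mod_cast hik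
    simp only [hc_def]
    have := mul_le_mul_of_nonneg_right (show (p₁:ℝ) - k ≤ (p₁:ℝ) - i by linarith) hmn0
    linarith
  have hcp₁ : c p₁ = 1 := by
    simp only [hc_def]
    ring
  -- the real polynomial function and its root ρ ∈ (A, A+1)
  set f : ℝ → ℝ := fun x => x^(p₁+1) - A * ∑ k ∈ Finset.range (p₁+1), c k * x^k with hf_def
  clear_value f
  have hf_cont : Continuous f := by
    rw [hf_def]
    apply Continuous.sub (continuous_pow _)
    exact continuous_const.mul (continuous_finset_sum _ fun i _ => continuous_const.mul (continuous_pow i))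
  have hfA : f A < 0 := by
    have hsum : (A:ℝ)^p₁ < ∑ k ∈ Finset.range (p₁+1), c k * A^k := by
      rw [Finset.sum_range_succ, hcp₁, one_mul]
      have hpos : 0 < ∑ k ∈ Finset.range p₁, c k * A^k :=
        Finset.sum_pos (fun i hi => mul_pos (hc_pos i (Finset.mem_range.mp hi).le)
          (pow_pos hA0 i)) (Finset.nonempty_range_iff.mpr (by omega))
      linarith
    have h2 : A * A^p₁ < A * ∑ k ∈ Finset.range (p₁+1), c k * A^k :=
      mul_lt_mul_of_pos_left hsum hA0
    have h3 := pow_succ A p₁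
    simp only [hf_def]
    nlinarith
  have hfA1 : 0 < f (A+1) := by
    have hA1 : (0:ℝ) < A+1 := by linarith
    have hsum : ∑ k ∈ Finset.range (p₁+1), c k * (A+1)^k ≤ ∑ k ∈ Finset.range (p₁+1), (A+1)^k := by
      apply Finset.sum_le_sum
      intro i hi
      have h1 := hc_le1 i (Nat.lt_succ_iff.mp (Finset.mem_range.mp hi))
      nlinarith [pow_pos hA1 i]
    have hgeo : A * (∑ k ∈ Finset.range (p₁+1), (A+1)^k) = (A+1)^(p₁+1) - 1 := by
      have := geom_sum_mul (A+1) (p₁+1)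
      rw [mul_comm]
      simpa using this
    have h2 : A * (∑ k ∈ Finset.range (p₁+1), c k * (A+1)^k)
        ≤ A * (∑ k ∈ Finset.range (p₁+1), (A+1)^k) := mul_le_mul_of_nonneg_left hsum hA0.le
    simp only [hf_def]
    linarith
  obtain ⟨ρ, hρmem, hρ0⟩ := intermediate_value_Ioo (show A ≤ A+1 by linarith)
    hf_cont.continuousOn (show (0:ℝ) ∈ Set.Ioo (f A) (f (A+1)) from ⟨hfA, hfA1⟩)
  obtain ⟨hAρ, hρA1⟩ := hρmem
  have hρ0' : ρ^(p₁+1) = A * ∑ i ∈ Finset.range (p₁+1), c i * ρ^i := by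
    have h2 := hρ0
    simp only [hf_def] at h2
    linarith
  have hρpos : 0 < ρ := by linarith
  have hρ2 : 2 < ρ := by linarith
  -- coefficients of the cofactor Q
  set S : ℕ → ℝ := fun j => ∑ i ∈ Finset.range (j+1), c i * ρ^i with hS_def
  clear_value S
  set b : ℕ → ℝ := fun j => A * S j / ρ^(j+1) with hb_def
  clear_value b
  have hS_pos : ∀ j, j ≤ p₁ → 0 < S j := by
    intro j hj
    simp only [hS_def]
    apply Finset.sum_pos
    · intro i hi
      exact mul_pos (hc_pos i (le_trans (Nat.lt_succ_iff.mp (Finset.mem_range.mp hi)) hj))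
        (pow_pos hρpos i)
    · exact Finset.nonempty_range_iff.mpr (by omega)
  have hb_pos : ∀ j, j ≤ p₁ → 0 < b j := by
    intro j hj
    simp only [hb_def]
    exact div_pos (mul_pos hA0 (hS_pos j hj)) (pow_pos hρpos (j+1))
  have hbtop : b p₁ = 1 := by
    simp only [hb_def, hS_def]
    rw [← hρ0']
    exact div_self (pow_ne_zero _ hρpos.ne')
  have hSrec : ∀ j : ℕ, S (j+1) = S j + c (j+1) * ρ^(j+1) := by
    intro j
    simp only [hS_def]
    exact Finset.sum_range_succ _ _
  have hbrec : ∀ j : ℕ, ρ * b (j+1) = b j + A * c (j+1) := by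
    intro j
    simp only [hb_def]
    rw [hSrec j]
    have hne : ρ^(j+1) ≠ 0 := (pow_pos hρpos (j+1)).ne'
    have hne2 : ρ^(j+1+1) ≠ 0 := (pow_pos hρpos (j+1+1)).ne'
    field_simp
    ring
  have hb0 : ρ * b 0 = A * c 0 := by
    simp only [hb_def, hS_def]
    rw [Finset.range_one, Finset.sum_singleton, pow_zero, mul_one, zero_add, pow_one]
    field_simp
  have hb_ratio : ∀ j, j < p₁ → b j ≤ 2 * b (j+1) := by
    intro j hj
    have hj1 : j + 1 ≤ p₁ := hj
    have hc1 := hc_pos (j+1) hj1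
    have hG : (∑ i ∈ Finset.range (j+1), ρ^i) * (ρ - 1) = ρ^(j+1) - 1 := geom_sum_mul ρ (j+1)
    have hG0 : 0 ≤ ∑ i ∈ Finset.range (j+1), ρ^i :=
      Finset.sum_nonneg fun i _ => (pow_pos hρpos i).le
    have hSG : S j ≤ c (j+1) * ∑ i ∈ Finset.range (j+1), ρ^i := by
      simp only [hS_def]
      rw [Finset.mul_sum]
      apply Finset.sum_le_sum
      intro i hi
      have hcle : c i ≤ c (j+1) := hc_mono i (j+1) (by have := Finset.mem_range.mp hi; omega)
      exact mul_le_mul_of_nonneg_right hcle (pow_pos hρpos i).le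
    have e1 : c (j+1) * ((∑ i ∈ Finset.range (j+1), ρ^i) * (ρ-1))
        = c (j+1) * (ρ^(j+1) - 1) := by rw [hG]
    have hkey : (ρ - 2) * S j ≤ 2 * c (j+1) * ρ^(j+1) := by
      nlinarith [e1, hSG, hG0, hc1, hρ2, pow_pos hρpos (j+1)]
    have hb2 : (ρ - 2) * b j ≤ 2 * (A * c (j+1)) := by
      simp only [hb_def]
      rw [mul_div_assoc', div_le_iff₀ (pow_pos hρpos (j+1))]
      nlinarith [hkey, hA0]
    have hrec := hbrec j
    nlinarith [hb_pos j (le_of_lt hj), hρ2]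
  -- the cofactor polynomial over ℂ
  set Qc : Polynomial ℂ := ∑ j ∈ Finset.range (p₁+1), C ((b j : ℝ) : ℂ) * X^j with hQc_def
  clear_value Qc
  have hcoeffQ : ∀ k, Qc.coeff k = if k < p₁+1 then ((b k : ℝ) : ℂ) else 0 := by
    intro k
    rw [hQc_def, Polynomial.finset_sum_coeff]
    simp only [Polynomial.coeff_C_mul, Polynomial.coeff_X_pow, mul_ite, mul_one, mul_zero]
    rw [Finset.sum_ite_eq (Finset.range (p₁+1)) k (fun j => ((b j : ℝ) : ℂ))]
    simp [Finset.mem_range]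
  have hQc_ne : Qc ≠ 0 := by
    intro hQ
    have h2 := hcoeffQ p₁
    rw [hQ, if_pos (by omega), hbtop] at h2
    simp at h2
  have hdegQ : Qc.natDegree = p₁ := by
    apply le_antisymm
    · rw [Polynomial.natDegree_le_iff_coeff_eq_zero]
      intro N hN
      rw [hcoeffQ, if_neg (by omega)]
    · apply Polynomial.le_natDegree_of_ne_zero
      rw [hcoeffQ, if_pos (by omega), hbtop]
      simp
  have hcard : Multiset.card Qc.roots = p₁ := by
    rw [Polynomial.splits_iff_card_roots.mp (IsAlgClosed.splits Qc), hdegQ]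
  -- the factorization P = (X - ρ) * Qc
  have hsum_eq : C ((n:ℂ)*(δ:ℂ)) * ∑ k ∈ Finset.range (p₁+1),
        C (1 - ((p₁:ℂ)-(k:ℂ))*((m:ℂ)/(n:ℂ))) * X^k
      = ∑ k ∈ Finset.range (p₁+1), C (((A * c k : ℝ)):ℂ) * X^k := by
    rw [Finset.mul_sum]
    refine Finset.sum_congr rfl fun k _ => ?_
    rw [← mul_assoc, ← C_mul]
    refine congrArg (· * X^k) (congrArg C ?_)
    simp only [hc_def, hA_def]
    push_cast
    ring
  have hfact : P = (X - C ((ρ:ℝ):ℂ)) * Qc := by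
    rw [hP, hsum_eq, hQc_def]
    exact factor_helper p₁ (fun k => ((A * c k : ℝ):ℂ)) ((ρ:ℝ):ℂ) (fun j => ((b j : ℝ):ℂ))
      (by simp [hbtop])
      (by push_cast; exact_mod_cast hb0)
      (fun j => by push_cast; exact_mod_cast hbrec j)
  have hroots : P.roots = ((ρ:ℝ):ℂ) ::ₘ Qc.roots := by
    rw [hfact, Polynomial.roots_mul (mul_ne_zero (Polynomial.X_sub_C_ne_zero _) hQc_ne),
      Polynomial.roots_X_sub_C, Multiset.singleton_add]
  have hρc : ‖((ρ:ℝ):ℂ)‖ = ρ := by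
    rw [Complex.norm_real, Real.norm_eq_abs, abs_of_pos hρpos]
  have hQroots : ∀ w ∈ Qc.roots, ‖w‖ ≤ 2 := by
    intro w hw
    have hwr := ((Polynomial.mem_roots hQc_ne).mp hw)
    have hev : ∑ j ∈ Finset.range (p₁+1), ((b j:ℝ):ℂ) * w^j = 0 := by
      have h2 : Polynomial.eval w Qc = 0 := hwr
      rw [hQc_def, Polynomial.eval_finset_sum] at h2
      simpa using h2
    exact ek_bound p₁ b (fun j hj => (hb_pos j hj).le) hbtop hb_ratio w hev
  -- final counting
  refine ⟨?_, ?_, ?_⟩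
  · intro r hr1 hr2
    rw [hroots, Multiset.filter_cons_of_neg _ (by
        show ¬ ‖((ρ:ℝ):ℂ)‖ ≤ r
        rw [hρc]; push_neg; linarith),
      Multiset.filter_eq_self.mpr (fun w hw => by
        show ‖w‖ ≤ r
        linarith [hQroots w hw]), hcard]
  · rw [hroots, Multiset.filter_cons_of_pos _ (by
        refine ⟨?_, ?_⟩ <;> rw [hρc]
        · linarith
        · linarith),
      Multiset.filter_eq_nil.mpr (fun w hw hcon => by
        have h2 := hQroots w hw
        have h3 := hcon.1
        linarith)]
    simp
  · rw [hroots, Multiset.filter_cons_of_neg _ (by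
        rintro ⟨h1, h2⟩
        rw [hρc] at h2
        linarith),
      Multiset.filter_eq_nil.mpr (fun w hw hcon => by
        have h2 := hQroots w hw
        linarith [hcon.1])]
    simp
end

section
/- For integers n ≥ 2 and m with ⌈√(n−1)⌉ ≤ m ≤ n−1: if m belongs to the set T_{n−1} = {⌊(n−1)/k⌋ : k = 1,…,n−1} then ⌊(n−1)/m⌋ − ⌊(n−1)/(m+1)⌋ = 1, and if m does not belong to T_{n−1} then ⌊(n−1)/m⌋ − ⌊(n−1)/(m+1)⌋ = 0. -/
private lemma aux_diff_le (N m : ℕ) (hm1 : 1 ≤ m) (hsq : N ≤ m * m) :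
    N / m ≤ N / (m + 1) + 1 := by
  have hq : N / m ≤ m := Nat.div_le_of_le_mul hsq
  rcases Nat.eq_zero_or_pos (N / m) with h0 | hpos
  · rw [h0]; exact Nat.zero_le _
  · obtain ⟨c, hc⟩ := Nat.exists_eq_add_of_le hpos
    -- N / m = 1 + c, c ≤ m
    have hcm : c + 1 ≤ m := by omega
    have h1 : c * (m + 1) ≤ N := by
      have hqm : (N / m) * m ≤ N := Nat.div_mul_le_self N m
      have : c * (m + 1) = c * m + c := by ring
      have h2 : c * m + m ≤ N := by
        have : (c + 1) * m ≤ N := by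
          have : (c + 1) * m = (N / m) * m := by rw [hc]; ring_nf
          omega
        calc c * m + m = (c + 1) * m := by ring
          _ ≤ N := this
      omega
    have h3 : c ≤ N / (m + 1) := (Nat.le_div_iff_mul_le (by omega)).mpr h1
    omega

/-- For `⌈√(n−1)⌉ ≤ m ≤ n−1`: if `m ∈ T_{n−1} = {⌊(n−1)/k⌋ : 1 ≤ k ≤ n−1}` then
`⌊(n−1)/m⌋ − ⌊(n−1)/(m+1)⌋ = 1`, and otherwise this difference is `0`. -/
theorem stmt_15 (n m : ℕ) (hn : 2 ≤ n)
    (hm_lo : ⌈Real.sqrt ((n : ℝ) - 1)⌉ ≤ (m : ℤ)) (hm_hi : m ≤ n - 1) :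
    ((∃ k : ℕ, 1 ≤ k ∧ k ≤ n - 1 ∧ m = (n - 1) / k) →
      (n - 1) / m - (n - 1) / (m + 1) = 1) ∧
    ((¬ ∃ k : ℕ, 1 ≤ k ∧ k ≤ n - 1 ∧ m = (n - 1) / k) →
      (n - 1) / m - (n - 1) / (m + 1) = 0) := by
  set N := n - 1 with hN
  have hN1 : 1 ≤ N := by omega
  have hsqrt : Real.sqrt ((n : ℝ) - 1) ≤ (m : ℝ) := by
    calc Real.sqrt ((n : ℝ) - 1) ≤ (⌈Real.sqrt ((n : ℝ) - 1)⌉ : ℝ) := Int.le_ceil _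
      _ ≤ ((m : ℤ) : ℝ) := by exact_mod_cast hm_lo
      _ = (m : ℝ) := by norm_num
  have hcast : ((n : ℝ) - 1) = (N : ℝ) := by
    have : (N : ℝ) = ((n - 1 : ℕ) : ℝ) := by rw [hN]
    rw [this]; push_cast [Nat.cast_sub (by omega : 1 ≤ n)]; ring
  have hsq : N ≤ m * m := by
    have h0 : (0 : ℝ) ≤ (N : ℝ) := by positivity
    have hs := Real.sq_sqrt h0
    rw [hcast] at hsqrt
    have hnn := Real.sqrt_nonneg (N : ℝ)
    have : (N : ℝ) ≤ (m : ℝ) * (m : ℝ) := by nlinarith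
    exact_mod_cast this
  have hm1 : 1 ≤ m := by nlinarith
  have hle : N / m ≤ N / (m + 1) + 1 := aux_diff_le N m hm1 hsq
  constructor
  · rintro ⟨k, hk1, hkN, hmk⟩
    have h1 : k * m ≤ N := by
      rw [hmk]; calc k * (N / k) = N / k * k := by ring
        _ ≤ N := Nat.div_mul_le_self N k
    have h2 : N < k * (m + 1) := by
      rw [hmk, Nat.mul_succ]
      have := Nat.div_add_mod N k
      have := Nat.mod_lt N (show 0 < k by omega)
      omega
    have h3 : k ≤ N / m := (Nat.le_div_iff_mul_le (by omega)).mpr h1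
    have h4 : N / (m + 1) < k := Nat.div_lt_of_lt_mul (by rw [Nat.mul_comm]; exact h2)
    omega
  · intro hne
    by_contra hd
    have hlt : N / (m + 1) < N / m := by
      have mono : N / (m + 1) ≤ N / m := Nat.div_le_div_left (by omega) (by omega)
      omega
    apply hne
    refine ⟨N / m, ?_, Nat.div_le_self N m, ?_⟩
    · exact (Nat.le_div_iff_mul_le (by omega)).mpr (by omega : 1 * m ≤ N)
    · have hk1 : 1 ≤ N / m := (Nat.le_div_iff_mul_le (by omega)).mpr (by omega)
      have h1 : N / m * m ≤ N := Nat.div_mul_le_self N m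
      have h2 : N < N / m * (m + 1) := by
        by_contra h
        push_neg at h
        have := (Nat.le_div_iff_mul_le (by omega : 0 < m + 1)).mpr h
        omega
      have hge : m ≤ N / (N / m) := (Nat.le_div_iff_mul_le (by omega)).mpr
        (by rw [Nat.mul_comm]; exact h1)
      have h2' : N < (m + 1) * (N / m) := by rw [Nat.mul_comm]; exact h2
      have hlt' : N / (N / m) < m + 1 := Nat.div_lt_of_lt_mul h2
      omega
end

section
/- Fix p₁ ≥ 1 and let m, n, δ satisfy the model-1 setting. The eigenvalue polynomial admits the algebraic identity: z^{p₁+1} − nδ Σ_{k=0}^{p₁} (1 − (p₁−k)(m/n)) z^k = (z − λ₊)(z − λ₋) Σ_{k=0}^{p₁−1} (p₁−k) z^k + (p₁+1)( z − (nδ + 1 − 1/(p₁+1)) ), where λ± are the two roots of z² − (nδ+2)z + 1 + nδ(1 + m/n) = 0. -/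
lemma aux_stmt18 (a b z : ℂ) : ∀ p : ℕ,
    z ^ (p + 1) - a * ∑ k ∈ Finset.range (p + 1), (1 - ((p : ℂ) - (k : ℂ)) * b) * z ^ k =
      (z ^ 2 - (a + 2) * z + 1 + a * (1 + b)) *
        ∑ k ∈ Finset.range p, ((p : ℂ) - (k : ℂ)) * z ^ k +
      ((p : ℂ) + 1) * (z - (a + 1)) + 1 := by
  intro p
  induction p with
  | zero => simp; ring
  | succ p ih =>
    have hgeo : (∑ k ∈ Finset.range (p + 1), z ^ k) * (z - 1) = z ^ (p + 1) - 1 :=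
      geom_sum_mul z (p + 1)
    have h1 : ∑ k ∈ Finset.range (p + 1), ((↑(p + 1) : ℂ) - (k : ℂ)) * z ^ k
        = (∑ k ∈ Finset.range p, ((p : ℂ) - (k : ℂ)) * z ^ k)
          + ∑ k ∈ Finset.range (p + 1), z ^ k := by
      have e : ∀ k ∈ Finset.range (p + 1), ((↑(p + 1) : ℂ) - (k : ℂ)) * z ^ k
          = ((p : ℂ) - (k : ℂ)) * z ^ k + z ^ k := by
        intro k _; push_cast; ring
      rw [Finset.sum_congr rfl e, Finset.sum_add_distrib,
        Finset.sum_range_succ (fun k => ((p : ℂ) - (k : ℂ)) * z ^ k)]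
      ring
    have h2 : ∑ k ∈ Finset.range (p + 1 + 1), (1 - ((↑(p + 1) : ℂ) - (k : ℂ)) * b) * z ^ k
        = (∑ k ∈ Finset.range (p + 1), (1 - ((p : ℂ) - (k : ℂ)) * b) * z ^ k)
          - b * (∑ k ∈ Finset.range (p + 1), z ^ k) + z ^ (p + 1) := by
      rw [Finset.sum_range_succ]
      have e : ∀ k ∈ Finset.range (p + 1), (1 - ((↑(p + 1) : ℂ) - (k : ℂ)) * b) * z ^ k
          = (1 - ((p : ℂ) - (k : ℂ)) * b) * z ^ k - b * z ^ k := by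
        intro k _; push_cast; ring
      rw [Finset.sum_congr rfl e, Finset.sum_sub_distrib, ← Finset.mul_sum]
      push_cast; ring
    rw [h1, h2]
    push_cast
    linear_combination ih + (1 + a - z) * hgeo

/-- Algebraic factorization identity for the model-1 eigenvalue polynomial:
`z^{p₁+1} − nδ Σ_{k=0}^{p₁} (1 − (p₁−k)(m/n)) z^k
 = (z − λ₊)(z − λ₋) Σ_{k=0}^{p₁−1} (p₁−k) z^k + (p₁+1)(z − (nδ + 1 − 1/(p₁+1)))`,
where `λ±` are the two roots of `z² − (nδ+2)z + 1 + nδ(1 + m/n) = 0`. -/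
theorem stmt_18 (n m : ℕ) (hn : 1 ≤ n) (hm : 1 ≤ m) (hmn : m ≤ n)
    (δ : ℂ) (p₁ : ℕ) (hp₁ : p₁ = (n - 1) / m) (hp₁1 : 1 ≤ p₁)
    (lamP lamM : ℂ)
    (hsum : lamP + lamM = (n : ℂ) * δ + 2)
    (hprod : lamP * lamM = 1 + (n : ℂ) * δ * (1 + (m : ℂ) / (n : ℂ))) (z : ℂ) :
    z ^ (p₁ + 1) - (n : ℂ) * δ *
        ∑ k ∈ Finset.range (p₁ + 1),
          (1 - ((p₁ : ℂ) - (k : ℂ)) * ((m : ℂ) / (n : ℂ))) * z ^ k =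
      (z - lamP) * (z - lamM) *
        ∑ k ∈ Finset.range p₁, ((p₁ : ℂ) - (k : ℂ)) * z ^ k +
      ((p₁ : ℂ) + 1) * (z - ((n : ℂ) * δ + 1 - 1 / ((p₁ : ℂ) + 1))) := by
  have H := aux_stmt18 ((n : ℂ) * δ) ((m : ℂ) / (n : ℂ)) z p₁
  have hne : ((p₁ : ℂ) + 1) ≠ 0 := Nat.cast_add_one_ne_zero p₁
  have h3 : ((p₁ : ℂ) + 1) * (1 / ((p₁ : ℂ) + 1)) = 1 := mul_one_div_cancel hne
  set S := ∑ k ∈ Finset.range p₁, ((p₁ : ℂ) - (k : ℂ)) * z ^ k with hS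
  linear_combination H + z * S * hsum - S * hprod - h3
end
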